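/- arXiv:alg-geom/9602008 — 6 statements merged into one kernel-verified Lean document; each statement's English description precedes it below -/
import Mathlib

section
/- For every integer n ≥ 1, setting k = 2n+1, the product over r = 1, …, 2n of (4·sin²(rπ/(2n+1)))^{⌊r/2⌋} equals (2n+1)^n. -/
open Finset

/-- The function `f_k(r) = 4 sin²(rπ/k)`. -/
noncomputable def f (k : ℕ) (r : ℝ) : ℝ := 4 * Real.sin (r * Real.pi / k) ^ 2

lemma normSq_one_sub_exp (x : ℝ) :
    Complex.normSq (1 - Complex.exp (x * Complex.I)) = 4 * Real.sin (x / 2) ^ 2 := by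
  have h1 : Real.cos (2 * (x / 2)) = 2 * Real.cos (x / 2) ^ 2 - 1 := Real.cos_two_mul _
  have h2 : Real.sin (x / 2) ^ 2 + Real.cos (x / 2) ^ 2 = 1 := Real.sin_sq_add_cos_sq _
  rw [show 2 * (x / 2) = x by ring] at h1
  have hre : ((x : ℂ) * Complex.I).re = 0 := by simp
  have him : ((x : ℂ) * Complex.I).im = x := by simp
  simp only [Complex.normSq_apply, Complex.sub_re, Complex.sub_im, Complex.one_re,
    Complex.one_im, Complex.exp_re, Complex.exp_im, hre, him, Real.exp_zero, one_mul, zero_sub]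
  nlinarith [Real.sin_sq_add_cos_sq x]

lemma prod_f (n : ℕ) :
    ∏ r ∈ Finset.Icc 1 (2 * n), f (2 * n + 1) (r : ℝ) = ((2 * n + 1 : ℕ) : ℝ) ^ 2 := by
  set μ : ℂ := Complex.exp (2 * Real.pi * Complex.I / (2 * n + 1 : ℕ)) with hμdef
  have hμ : IsPrimitiveRoot μ (2 * n + 1) :=
    Complex.isPrimitiveRoot_exp (2 * n + 1) (by omega)
  have key : ∏ k ∈ range (2 * n), (1 - μ ^ (k + 1)) = ((2 * n : ℕ) : ℂ) + 1 :=
    hμ.prod_one_sub_pow_eq_order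
  have h2 := congrArg Complex.normSq key
  rw [map_prod] at h2
  have hterm : ∀ k, Complex.normSq (1 - μ ^ (k + 1)) = f (2 * n + 1) ((k + 1 : ℕ) : ℝ) := by
    intro k
    have hx : μ ^ (k + 1) =
        Complex.exp (((2 * Real.pi * (k + 1) / (2 * n + 1 : ℕ)) : ℝ) * Complex.I) := by
      rw [hμdef, ← Complex.exp_nat_mul]
      congr 1
      push_cast
      have : ((2 * n + 1 : ℕ) : ℂ) ≠ 0 := Nat.cast_ne_zero.mpr (Nat.succ_ne_zero _)
      field_simp
    rw [hx, normSq_one_sub_exp, f]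
    congr 1
    push_cast
    ring
  simp only [hterm] at h2
  have hnorm : Complex.normSq (((2 * n : ℕ) : ℂ) + 1) = ((2 * n + 1 : ℕ) : ℝ) ^ 2 := by
    have : (((2 * n : ℕ) : ℂ) + 1) = (((2 * n + 1 : ℕ) : ℝ) : ℂ) := by push_cast; ring
    rw [this, Complex.normSq_ofReal]; ring
  rw [hnorm] at h2
  rw [← h2]
  rw [show Finset.Icc 1 (2 * n) = Finset.Ico 1 (2 * n + 1) by rw [Finset.Ico_add_one_right_eq_Icc],
    Finset.prod_Ico_eq_prod_range]
  simp only [Nat.add_sub_cancel]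
  apply Finset.prod_congr rfl
  intro k _
  norm_num [add_comm]

/-- For every `n ≥ 1`, with `k = 2n+1`:
`∏_{r=1}^{2n} (4 sin²(rπ/(2n+1)))^⌊r/2⌋ = (2n+1)^n`. -/
theorem prod_f_pow_odd (n : ℕ) (hn : 1 ≤ n) :
    ∏ r ∈ Finset.Icc 1 (2 * n), f (2 * n + 1) (r : ℝ) ^ (r / 2) = (2 * n + 1 : ℝ) ^ n := by
  set P := ∏ r ∈ Finset.Icc 1 (2 * n), f (2 * n + 1) (r : ℝ) ^ (r / 2) with hP
  have hf_nonneg : ∀ r : ℝ, 0 ≤ f (2 * n + 1) r := fun r => by unfold f; positivity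
  have hP_nonneg : 0 ≤ P := Finset.prod_nonneg fun r _ => pow_nonneg (hf_nonneg _) _
  -- reflection: P also equals the product with exponent (2n+1-r)/2
  have hrefl : P = ∏ r ∈ Finset.Icc 1 (2 * n), f (2 * n + 1) (r : ℝ) ^ ((2 * n + 1 - r) / 2) := by
    rw [hP]
    apply Finset.prod_nbij' (fun r => 2 * n + 1 - r) (fun r => 2 * n + 1 - r)
    · intro a ha; simp only [Finset.mem_Icc] at *; omega
    · intro a ha; simp only [Finset.mem_Icc] at *; omega
    · intro a ha; simp only [Finset.mem_Icc] at ha; omega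
    · intro a ha; simp only [Finset.mem_Icc] at ha; omega
    · intro a ha
      simp only [Finset.mem_Icc] at ha
      have hcast : ((2 * n + 1 - a : ℕ) : ℝ) = (2 * n + 1 : ℝ) - a := by
        push_cast [Nat.cast_sub (by omega : a ≤ 2 * n + 1)]; ring
      have hfval : f (2 * n + 1) ((2 * n + 1 - a : ℕ) : ℝ) = f (2 * n + 1) (a : ℝ) := by
        unfold f
        rw [hcast]
        congr 1
        rw [show ((2 * n + 1 : ℝ) - a) * Real.pi / (2 * n + 1 : ℕ) =
          Real.pi - a * Real.pi / (2 * n + 1 : ℕ) by push_cast; field_simp,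
          Real.sin_pi_sub]
      rw [hfval]
      congr 1
      omega
  have hsq : P * P = ((2 * n + 1 : ℕ) : ℝ) ^ (2 * n) := by
    nth_rewrite 2 [hrefl]
    rw [← Finset.prod_mul_distrib]
    have : ∀ r ∈ Finset.Icc 1 (2 * n),
        f (2 * n + 1) (r : ℝ) ^ (r / 2) * f (2 * n + 1) (r : ℝ) ^ ((2 * n + 1 - r) / 2)
          = f (2 * n + 1) (r : ℝ) ^ n := by
      intro r hr
      simp only [Finset.mem_Icc] at hr
      rw [← pow_add]
      congr 1
      omega
    rw [Finset.prod_congr rfl this, Finset.prod_pow, prod_f, ← pow_mul]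
  have hQ : (0:ℝ) ≤ (2 * n + 1 : ℝ) ^ n := by positivity
  calc P = Real.sqrt (P * P) := (Real.sqrt_mul_self hP_nonneg).symm
    _ = Real.sqrt (((2 * n + 1 : ℝ) ^ n) ^ 2) := by
        rw [hsq, ← pow_mul]
        congr 1
        push_cast
        ring
    _ = (2 * n + 1 : ℝ) ^ n := Real.sqrt_sq hQ
end

section
/- For every integer n ≥ 1, setting k = 2n, the product over r = 1, …, 2n−1 of (4·sin²(rπ/(2n)))^{⌊r/2⌋} equals 2^{n−1}·n^n. -/
set_option maxHeartbeats 800000 in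
/-- Key identity: `∏_{r=1}^{m-1} 4 sin²(rπ/m) = m²`. -/
lemma prod_four_sin_sq (m : ℕ) (hm : 1 ≤ m) :
    ∏ r ∈ Finset.Icc 1 (m - 1), (4 * Real.sin (r * Real.pi / m) ^ 2) = (m : ℝ) ^ 2 := by
  obtain ⟨n, rfl⟩ : ∃ n, m = n + 1 := ⟨m - 1, by omega⟩
  set μ : ℂ := Complex.exp (2 * Real.pi * Complex.I / ((n + 1 : ℕ) : ℂ)) with hμdef
  have hμ : IsPrimitiveRoot μ (n + 1) :=
    Complex.isPrimitiveRoot_exp _ (Nat.succ_ne_zero n)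
  have h := hμ.prod_one_sub_pow_eq_order
  have habs : ∏ k ∈ Finset.range n, ‖1 - μ ^ (k + 1)‖ = ((n + 1 : ℕ) : ℝ) := by
    rw [← norm_prod, h]
    have hc : ((n : ℂ) + 1) = ((n + 1 : ℕ) : ℂ) := by push_cast; ring
    rw [hc, Complex.norm_natCast]
  have key : ∀ k : ℕ, (‖1 - μ ^ (k + 1)‖) ^ 2
      = 4 * Real.sin (((k + 1 : ℕ) : ℝ) * Real.pi / ((n + 1 : ℕ) : ℝ)) ^ 2 := by
    intro k
    have hθ : μ ^ (k + 1)
        = Complex.exp ((2 * Real.pi * ((k + 1 : ℕ) : ℝ) / ((n + 1 : ℕ) : ℝ) : ℝ) * Complex.I) := by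
      rw [hμdef, ← Complex.exp_nat_mul]
      congr 1
      have : ((n + 1 : ℕ) : ℂ) ≠ 0 := by
        exact Nat.cast_ne_zero.mpr (Nat.succ_ne_zero n)
      simp only [Complex.ofReal_div, Complex.ofReal_mul, Complex.ofReal_natCast, Complex.ofReal_ofNat]
      field_simp
    rw [hθ, Complex.exp_mul_I, Complex.sq_norm]
    set θ : ℝ := 2 * Real.pi * ((k + 1 : ℕ) : ℝ) / ((n + 1 : ℕ) : ℝ) with hθdef
    have h1 : (1 : ℂ) - (Complex.cos θ + Complex.sin θ * Complex.I)
        = Complex.ofReal (1 - Real.cos θ) + Complex.ofReal (- Real.sin θ) * Complex.I := by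
      push_cast [Complex.ofReal_cos, Complex.ofReal_sin]
      ring
    rw [h1, Complex.normSq_add_mul_I]
    have h2 : Real.sin (θ / 2) ^ 2 = 1 / 2 - Real.cos (2 * (θ / 2)) / 2 :=
      Real.sin_sq_eq_half_sub (θ / 2)
    have h3 : ((k + 1 : ℕ) : ℝ) * Real.pi / ((n + 1 : ℕ) : ℝ) = θ / 2 := by
      rw [hθdef]; ring
    rw [h3, h2]
    have h5 := Real.sin_sq_add_cos_sq θ
    have h4 : 2 * (θ / 2) = θ := by ring
    rw [h4]
    nlinarith [h5]
  have hsq : (∏ k ∈ Finset.range n, ‖1 - μ ^ (k + 1)‖) ^ 2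
      = ∏ k ∈ Finset.range n, (4 * Real.sin (((k + 1 : ℕ) : ℝ) * Real.pi / ((n + 1 : ℕ) : ℝ)) ^ 2) := by
    rw [← Finset.prod_pow]
    exact Finset.prod_congr rfl fun k _ => key k
  have hfin : ∏ k ∈ Finset.range n, (4 * Real.sin (((k + 1 : ℕ) : ℝ) * Real.pi / ((n + 1 : ℕ) : ℝ)) ^ 2)
      = ((n + 1 : ℕ) : ℝ) ^ 2 := by
    rw [← hsq, habs]
  rw [← hfin]
  have hs : (n : ℕ) + 1 - 1 = n := rfl
  rw [hs]
  refine Finset.prod_nbij' (fun r => r - 1) (fun k => k + 1) ?_ ?_ ?_ ?_ ?_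
  · intro a ha; simp only [Finset.mem_Icc] at ha; simp only [Finset.mem_range]; omega
  · intro a ha; simp only [Finset.mem_range] at ha; simp only [Finset.mem_Icc]; omega
  · intro a ha; simp only [Finset.mem_Icc] at ha; omega
  · intro a ha; simp only [Finset.mem_range] at ha; omega
  · intro a ha
    simp only [Finset.mem_Icc] at ha
    have h6 : a - 1 + 1 = a := by omega
    rw [h6]

theorem f_nonneg (k : ℕ) (r : ℝ) : 0 ≤ f k r := by
  unfold f; positivity

/-- For every `n ≥ 1`, with `k = 2n`:
`∏_{r=1}^{2n-1} (4 sin²(rπ/(2n)))^⌊r/2⌋ = 2^{n-1} n^n`. -/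
theorem prod_f_pow_even (n : ℕ) (hn : 1 ≤ n) :
    ∏ r ∈ Finset.Icc 1 (2 * n - 1), f (2 * n) (r : ℝ) ^ (r / 2)
      = 2 ^ (n - 1) * (n : ℝ) ^ n := by
  set P : ℝ := ∏ r ∈ Finset.Icc 1 (2 * n - 1), f (2 * n) (r : ℝ) ^ (r / 2) with hP
  have hPnn : 0 ≤ P := Finset.prod_nonneg fun r _ => pow_nonneg (f_nonneg _ _) _
  have hRnn : (0 : ℝ) ≤ 2 ^ (n - 1) * (n : ℝ) ^ n := by positivity
  have hfsymm : ∀ r ∈ Finset.Icc 1 (2 * n - 1), f (2 * n) ((2 * n - r : ℕ) : ℝ) = f (2 * n) (r : ℝ) := by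
    intro r hr
    simp only [Finset.mem_Icc] at hr
    have hcast : ((2 * n - r : ℕ) : ℝ) = 2 * n - r := by
      push_cast [Nat.cast_sub (by omega : r ≤ 2 * n)]; ring
    unfold f
    rw [hcast]
    have h2n : ((2 * n : ℕ) : ℝ) ≠ 0 := by positivity
    have : ((2 * (n : ℝ)) - r) * Real.pi / ((2 * n : ℕ) : ℝ)
        = Real.pi - r * Real.pi / ((2 * n : ℕ) : ℝ) := by
      field_simp
      push_cast
      ring
    push_cast at this ⊢
    rw [this, Real.sin_pi_sub]
  -- reflection
  have hrefl : P = ∏ r ∈ Finset.Icc 1 (2 * n - 1), f (2 * n) (r : ℝ) ^ ((2 * n - r) / 2) := by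
    rw [hP]
    refine Finset.prod_nbij' (fun r => 2 * n - r) (fun r => 2 * n - r) ?_ ?_ ?_ ?_ ?_
    · intro a ha; simp only [Finset.mem_Icc] at ha ⊢; omega
    · intro a ha; simp only [Finset.mem_Icc] at ha ⊢; omega
    · intro a ha; simp only [Finset.mem_Icc] at ha; omega
    · intro a ha; simp only [Finset.mem_Icc] at ha; omega
    · intro a ha
      simp only [Finset.mem_Icc] at ha
      rw [hfsymm a (Finset.mem_Icc.mpr ha)]
      congr 1
      omega
  have hsq : P ^ 2 = ∏ r ∈ Finset.Icc 1 (2 * n - 1),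
      f (2 * n) (r : ℝ) ^ (r / 2 + (2 * n - r) / 2) := by
    rw [sq]
    nth_rewrite 2 [hrefl]
    nth_rewrite 1 [hP]
    rw [← Finset.prod_mul_distrib]
    exact Finset.prod_congr rfl fun r _ => by rw [← pow_add]
  have hexp : ∀ r ∈ Finset.Icc 1 (2 * n - 1),
      r / 2 + (2 * n - r) / 2 = (n - 1) + (if r % 2 = 0 then 1 else 0) := by
    intro r hr
    simp only [Finset.mem_Icc] at hr
    rcases Nat.even_or_odd r with ⟨k, hk⟩ | ⟨k, hk⟩
    · simp only [hk]
      have : (k + k) % 2 = 0 := by omega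
      rw [this]; simp only [if_true]; omega
    · have : r % 2 = 1 := by omega
      rw [this]; simp only [Nat.one_ne_zero, if_false]; omega
  have hsplit : P ^ 2 = (∏ r ∈ Finset.Icc 1 (2 * n - 1), f (2 * n) (r : ℝ)) ^ (n - 1)
      * ∏ r ∈ Finset.Icc 1 (2 * n - 1), f (2 * n) (r : ℝ) ^ (if r % 2 = 0 then 1 else 0) := by
    rw [hsq, ← Finset.prod_pow, ← Finset.prod_mul_distrib]
    refine Finset.prod_congr rfl fun r hr => ?_
    rw [hexp r hr, pow_add]
  have hA : ∏ r ∈ Finset.Icc 1 (2 * n - 1), f (2 * n) (r : ℝ) = ((2 * n : ℕ) : ℝ) ^ 2 := by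
    have := prod_four_sin_sq (2 * n) (by omega)
    simpa [f] using this
  have hB : ∏ r ∈ Finset.Icc 1 (2 * n - 1), f (2 * n) (r : ℝ) ^ (if r % 2 = 0 then 1 else 0)
      = ((n : ℕ) : ℝ) ^ 2 := by
    have hite : ∀ r : ℕ, f (2 * n) (r : ℝ) ^ (if r % 2 = 0 then 1 else 0)
        = if r % 2 = 0 then f (2 * n) (r : ℝ) else 1 := by
      intro r; split <;> simp
    simp_rw [hite]
    rw [Finset.prod_ite, Finset.prod_const_one, mul_one]
    have hre : ∏ r ∈ (Finset.Icc 1 (2 * n - 1)).filter (fun r => r % 2 = 0), f (2 * n) (r : ℝ)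
        = ∏ s ∈ Finset.Icc 1 (n - 1), f (2 * n) ((2 * s : ℕ) : ℝ) := by
      refine Finset.prod_nbij' (fun r => r / 2) (fun s => 2 * s) ?_ ?_ ?_ ?_ ?_
      · intro a ha; simp only [Finset.mem_filter, Finset.mem_Icc] at ha ⊢; omega
      · intro a ha; simp only [Finset.mem_filter, Finset.mem_Icc] at ha ⊢; omega
      · intro a ha; simp only [Finset.mem_filter, Finset.mem_Icc] at ha; omega
      · intro a ha; simp only [Finset.mem_filter, Finset.mem_Icc] at ha; omega
      · intro a ha
        simp only [Finset.mem_filter, Finset.mem_Icc] at ha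
        have h7 : 2 * (a / 2) = a := by omega
        rw [h7]
    rw [hre]
    have hval : ∀ s : ℕ, f (2 * n) ((2 * s : ℕ) : ℝ) = 4 * Real.sin (s * Real.pi / n) ^ 2 := by
      intro s
      have hn0 : (n : ℝ) ≠ 0 := Nat.cast_ne_zero.mpr (by omega)
      have harg : ((2 * s : ℕ) : ℝ) * Real.pi / ((2 * n : ℕ) : ℝ) = s * Real.pi / n := by
        push_cast
        field_simp
      unfold f
      rw [harg]
    simp_rw [hval]
    exact prod_four_sin_sq n hn
  have hP2 : P ^ 2 = (2 ^ (n - 1) * (n : ℝ) ^ n) ^ 2 := by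
    rw [hsplit, hA, hB]
    push_cast
    have h2n : 2 * (n - 1) + 2 = n * 2 := by omega
    calc ((2 * (n : ℝ)) ^ 2) ^ (n - 1) * (n : ℝ) ^ 2
        = (2 : ℝ) ^ (2 * (n - 1)) * (n : ℝ) ^ (2 * (n - 1) + 2) := by
          rw [← pow_mul, mul_pow, pow_add, Nat.mul_comm 2 (n - 1), pow_mul, pow_mul]
          ring
      _ = (2 : ℝ) ^ ((n - 1) * 2) * (n : ℝ) ^ (n * 2) := by
          rw [h2n, Nat.mul_comm 2 (n - 1)]
      _ = (2 ^ (n - 1) * (n : ℝ) ^ n) ^ 2 := by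
          rw [mul_pow, ← pow_mul, ← pow_mul]
  exact (sq_eq_sq₀ hPnn hRnn).mp hP2
end

section
/- For every integer n ≥ 1, setting k = 2n, the product over r = 1, …, 2n−1 of (4·sin²(rπ/(2n)))^{⌊(r+1)/2⌋} equals 2^{n+1}·n^n. -/
open Real Finset

lemma abs_one_sub_exp (θ : ℝ) :
    ‖1 - Complex.exp (θ * Complex.I)‖ = 2 * |Real.sin (θ / 2)| := by
  rw [Complex.exp_mul_I]
  have h : (1 : ℂ) - (Complex.cos θ + Complex.sin θ * Complex.I)
      = Complex.mk (1 - Real.cos θ) (-Real.sin θ) := by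
    apply Complex.ext <;> simp [Complex.cos_ofReal_re, Complex.sin_ofReal_re]
  rw [h, Complex.norm_def, Complex.normSq_mk]
  have h2 : (1 - Real.cos θ) * (1 - Real.cos θ) + -Real.sin θ * -Real.sin θ
      = (2 * |Real.sin (θ / 2)|) ^ 2 := by
    have h3 := Real.cos_two_mul (θ / 2)
    rw [show 2 * (θ / 2) = θ by ring] at h3
    have hs := Real.sin_sq_add_cos_sq θ
    have hs2 := Real.sin_sq_add_cos_sq (θ / 2)
    rw [mul_pow, sq_abs]
    nlinarith
  rw [h2, Real.sqrt_sq (by positivity)]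

lemma prod_two_sin' (k : ℕ) (hk : 1 ≤ k) :
    ∏ r ∈ Icc 1 (k - 1), (2 * Real.sin (r * π / k)) = k := by
  obtain ⟨m, rfl⟩ : ∃ m, k = m + 1 := ⟨k - 1, by omega⟩
  have hμ := Complex.isPrimitiveRoot_exp (m + 1) (by omega)
  have h := hμ.prod_one_sub_pow_eq_order
  apply_fun (‖·‖) at h
  rw [norm_prod] at h
  push_cast at h
  have key : ∀ j ∈ range m,
      ‖1 - Complex.exp (2 * π * Complex.I / (m + 1)) ^ (j + 1)‖
        = 2 * Real.sin ((j + 1) * π / (m + 1)) := by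
    intro j hj
    rw [← Complex.exp_nat_mul]
    have he : ((j : ℂ) + 1) * (2 * ↑π * Complex.I / (↑m + 1))
        = ((2 * (j + 1) * π / (m + 1) : ℝ) : ℂ) * Complex.I := by
      push_cast
      ring
    rw [Nat.cast_add, Nat.cast_one, he, abs_one_sub_exp]
    rw [show 2 * (↑j + 1) * π / (↑m + 1) / 2 = (↑j + 1) * π / (↑m + 1) by ring]
    rw [abs_of_nonneg]
    apply Real.sin_nonneg_of_nonneg_of_le_pi
    · positivity
    · rw [div_le_iff₀ (by positivity)]
      simp only [Finset.mem_range] at hj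
      have : (j : ℝ) + 1 ≤ m + 1 := by exact_mod_cast Nat.succ_le_succ hj.le
      nlinarith [Real.pi_pos]
  rw [Finset.prod_congr rfl key] at h
  rw [show ((m : ℂ) + 1) = ((m + 1 : ℕ) : ℂ) by push_cast; ring, Complex.norm_natCast] at h
  rw [← Finset.Ico_add_one_right_eq_Icc, Finset.prod_Ico_eq_prod_range]
  simp only [Nat.add_sub_cancel]
  refine Eq.trans ?_ h
  apply Finset.prod_congr (by norm_num)
  intro j hj
  push_cast
  ring_nf

lemma f_total (n : ℕ) (hn : 1 ≤ n) :
    ∏ r ∈ Icc 1 (2 * n - 1), f (2 * n) (r : ℝ) = (((2 * n : ℕ) : ℝ)) ^ 2 := by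
  have h := prod_two_sin' (2 * n) (by omega)
  calc ∏ r ∈ Icc 1 (2 * n - 1), f (2 * n) (r : ℝ)
      = ∏ r ∈ Icc 1 (2 * n - 1), (2 * Real.sin ((r : ℝ) * π / ((2 * n : ℕ) : ℝ))) ^ 2 := by
        apply prod_congr rfl; intro r _; unfold f; ring
    _ = (((2 * n : ℕ) : ℝ)) ^ 2 := by rw [Finset.prod_pow, h]

lemma f_even (n : ℕ) (hn : 1 ≤ n) :
    ∏ r ∈ (Icc 1 (2 * n - 1)).filter (fun r => r % 2 = 0), f (2 * n) (r : ℝ)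
      = (n : ℝ) ^ 2 := by
  have h := prod_two_sin' n hn
  have step : ∏ r ∈ (Icc 1 (2 * n - 1)).filter (fun r => r % 2 = 0), f (2 * n) (r : ℝ)
      = ∏ s ∈ Icc 1 (n - 1), f (2 * n) ((2 * s : ℕ) : ℝ) := by
    apply Finset.prod_nbij' (fun r => r / 2) (fun s => 2 * s)
    · intro r hr; simp only [mem_filter, mem_Icc] at hr ⊢; omega
    · intro t ht; simp only [mem_filter, mem_Icc] at ht ⊢; omega
    · intro r hr; simp only [mem_filter, mem_Icc] at hr; omega
    · intro t ht; simp only [mem_Icc] at ht; omega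
    · intro r hr; simp only [mem_filter, mem_Icc] at hr
      congr 2; omega
  rw [step]
  calc ∏ s ∈ Icc 1 (n - 1), f (2 * n) ((2 * s : ℕ) : ℝ)
      = ∏ s ∈ Icc 1 (n - 1), (2 * Real.sin ((s : ℝ) * π / (n : ℝ))) ^ 2 := by
        apply prod_congr rfl; intro t _
        unfold f
        have hn0 : (n : ℝ) ≠ 0 := Nat.cast_ne_zero.mpr (by omega)
        rw [show ((2 * t : ℕ) : ℝ) * π / ((2 * n : ℕ) : ℝ) = (t : ℝ) * π / (n : ℝ) by
          push_cast; field_simp]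
        ring
    _ = (n : ℝ) ^ 2 := by rw [Finset.prod_pow, h]

lemma f_pos (n : ℕ) (hn : 1 ≤ n) : ∀ r ∈ Icc 1 (2 * n - 1), 0 < f (2 * n) (r : ℝ) := by
  intro r hr
  simp only [mem_Icc] at hr
  unfold f
  have hs : 0 < Real.sin ((r : ℝ) * π / ((2 * n : ℕ) : ℝ)) := by
    apply Real.sin_pos_of_pos_of_lt_pi
    · have h1 : (0:ℝ) < r := by exact_mod_cast Nat.lt_of_lt_of_le Nat.zero_lt_one hr.1
      have h2 : (0:ℝ) < ((2 * n : ℕ) : ℝ) := by positivity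
      positivity
    · rw [div_lt_iff₀ (by positivity)]
      have : (r : ℝ) < ((2 * n : ℕ) : ℝ) := by exact_mod_cast Nat.lt_of_le_of_lt hr.2 (by omega)
      nlinarith [Real.pi_pos]
  nlinarith [hs]

/-- For every `n ≥ 1`, with `k = 2n`:
`∏_{r=1}^{2n-1} (4 sin²(rπ/(2n)))^⌊(r+1)/2⌋ = 2^{n+1} n^n`. -/
theorem prod_f_pow_even' (n : ℕ) (hn : 1 ≤ n) :
    ∏ r ∈ Finset.Icc 1 (2 * n - 1), f (2 * n) (r : ℝ) ^ ((r + 1) / 2)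
      = 2 ^ (n + 1) * (n : ℝ) ^ n := by
  have hfpos := f_pos n hn
  have hPpos : 0 < ∏ r ∈ Icc 1 (2 * n - 1), f (2 * n) (r : ℝ) ^ ((r + 1) / 2) :=
    Finset.prod_pos fun r hr => pow_pos (hfpos r hr) _
  have hRpos : (0:ℝ) < 2 ^ (n + 1) * (n : ℝ) ^ n := by positivity
  have hsymm : ∀ r ∈ Icc 1 (2 * n - 1),
      f (2 * n) (((2 * n - r : ℕ)) : ℝ) = f (2 * n) (r : ℝ) := by
    intro r hr
    simp only [mem_Icc] at hr
    unfold f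
    congr 1
    rw [Nat.cast_sub (by omega)]
    rw [show (((2 * n : ℕ) : ℝ) - r) * π / ((2 * n : ℕ) : ℝ)
        = π - (r : ℝ) * π / ((2 * n : ℕ) : ℝ) by
      have h0 : ((2 * n : ℕ) : ℝ) ≠ 0 := Nat.cast_ne_zero.mpr (by omega)
      field_simp]
    rw [Real.sin_pi_sub]
  have hP' : ∏ r ∈ Icc 1 (2 * n - 1), f (2 * n) (r : ℝ) ^ ((r + 1) / 2)
      = ∏ r ∈ Icc 1 (2 * n - 1), f (2 * n) (r : ℝ) ^ ((2 * n - r + 1) / 2) := by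
    apply Finset.prod_nbij' (fun r => 2 * n - r) (fun r => 2 * n - r)
    · intro r hr; simp only [mem_Icc] at hr ⊢; omega
    · intro r hr; simp only [mem_Icc] at hr ⊢; omega
    · intro r hr; simp only [mem_Icc] at hr; omega
    · intro r hr; simp only [mem_Icc] at hr; omega
    · intro r hr
      rw [hsymm r hr]
      congr 1
      simp only [mem_Icc] at hr
      omega
  have hodd : ∏ r ∈ (Icc 1 (2 * n - 1)).filter (fun r => ¬ r % 2 = 0),
      f (2 * n) (r : ℝ) = 4 := by
    have hmul := Finset.prod_filter_mul_prod_filter_not (Icc 1 (2 * n - 1))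
      (fun r => r % 2 = 0) (fun r => f (2 * n) (r : ℝ))
    rw [f_even n hn, f_total n hn] at hmul
    have hn0 : (n : ℝ) ^ 2 ≠ 0 := by
      have : (n : ℝ) ≠ 0 := Nat.cast_ne_zero.mpr (by omega)
      positivity
    apply mul_left_cancel₀ hn0
    rw [hmul]
    push_cast
    ring
  have hsq : (∏ r ∈ Icc 1 (2 * n - 1), f (2 * n) (r : ℝ) ^ ((r + 1) / 2)) ^ 2
      = ∏ r ∈ Icc 1 (2 * n - 1), f (2 * n) (r : ℝ) ^ (n + r % 2) := by
    rw [sq]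
    nth_rewrite 2 [hP']
    rw [← Finset.prod_mul_distrib]
    apply prod_congr rfl
    intro r hr
    rw [← pow_add]
    congr 1
    simp only [mem_Icc] at hr
    omega
  have hsq2 : (∏ r ∈ Icc 1 (2 * n - 1), f (2 * n) (r : ℝ) ^ ((r + 1) / 2)) ^ 2
      = (((2 * n : ℕ) : ℝ) ^ 2) ^ n * 4 := by
    rw [hsq]
    have hh : ∀ r ∈ Icc 1 (2 * n - 1), f (2 * n) (r : ℝ) ^ (n + r % 2)
        = f (2 * n) (r : ℝ) ^ n * f (2 * n) (r : ℝ) ^ (r % 2) := fun r _ => pow_add _ _ _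
    rw [prod_congr rfl hh, Finset.prod_mul_distrib, Finset.prod_pow, f_total n hn]
    congr 1
    rw [← hodd, Finset.prod_filter]
    apply prod_congr rfl
    intro r _
    rcases Nat.mod_two_eq_zero_or_one r with h | h <;> simp [h]
  have hRsq : (2 ^ (n + 1) * (n : ℝ) ^ n) ^ 2 = (((2 * n : ℕ) : ℝ) ^ 2) ^ n * 4 := by
    have e1 : (2 ^ (n + 1) * (n : ℝ) ^ n) ^ 2 = 2 ^ (2 * n) * (n : ℝ) ^ (2 * n) * 4 := by
      rw [mul_pow, ← pow_mul, ← pow_mul, show (n + 1) * 2 = 2 * n + 2 from by ring, pow_add,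
        show n * 2 = 2 * n from by ring]
      ring
    have e2 : ((((2 * n : ℕ)) : ℝ) ^ 2) ^ n * 4 = 2 ^ (2 * n) * (n : ℝ) ^ (2 * n) * 4 := by
      push_cast
      rw [show ((2 : ℝ) * n) ^ 2 = 2 ^ 2 * (n : ℝ) ^ 2 from by ring, mul_pow,
        ← pow_mul, ← pow_mul]
    rw [e1, e2]
  have := hsq2.trans hRsq.symm
  nlinarith [this, hPpos, hRpos]
end

section
/- For all integers n ≥ 2 and 1 ≤ l ≤ n−1, one has (∏_{j=l+1}^{n} f_{2n}(j−l)·f_{2n}(j+l)) · (∏_{i=0}^{l−1} f_{2n}(l−i)·f_{2n}(l+i)) = 4n², where f_k(r) = 4·sin²(rπ/k). -/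
open Finset Polynomial

lemma lemA {m : ℕ} (hm : 0 < m) {ω : ℂ} (hω : IsPrimitiveRoot ω m) {a : ℕ} (ha : a < m) :
    ∏ j ∈ (Finset.range m).erase a, (ω ^ a - ω ^ j) = m * (ω ^ a) ^ (m - 1) := by
  classical
  have hpow1 : ∀ i : ℕ, (ω ^ i) ^ m = 1 := fun i => by
    rw [← pow_mul, mul_comm, pow_mul, hω.pow_eq_one, one_pow]
  have himage : (Finset.range m).image (ω ^ ·) = Polynomial.nthRootsFinset m (1 : ℂ) := by
    apply Finset.eq_of_subset_of_card_le
    · intro x hx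
      simp only [Finset.mem_image, Finset.mem_range] at hx
      obtain ⟨i, hi, rfl⟩ := hx
      exact (Polynomial.mem_nthRootsFinset hm 1).2 (hpow1 i)
    · rw [hω.card_nthRootsFinset, Finset.card_image_of_injOn, Finset.card_range]
      intro i hi j hj h
      exact hω.pow_inj (Finset.mem_range.1 hi) (Finset.mem_range.1 hj) h
  have hprod : (X : ℂ[X]) ^ m - 1 = ∏ j ∈ Finset.range m, (X - C (ω ^ j)) := by
    rw [X_pow_sub_one_eq_prod hm hω, ← himage, Finset.prod_image]
    intro i hi j hj h
    exact hω.pow_inj (Finset.mem_range.1 hi) (Finset.mem_range.1 hj) h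
  have hmem : a ∈ Finset.range m := Finset.mem_range.2 ha
  have h1 : (∏ j ∈ (Finset.range m).erase a, ((X : ℂ[X]) - C (ω ^ j))) * (X - C (ω ^ a))
      = (X : ℂ[X]) ^ m - 1 := by
    rw [hprod, ← Finset.prod_erase_mul _ _ hmem]
  have h2 : (∑ i ∈ Finset.range m, (X : ℂ[X]) ^ i * (C (ω ^ a)) ^ (m - 1 - i)) * (X - C (ω ^ a))
      = (X : ℂ[X]) ^ m - 1 := by
    rw [geom_sum₂_mul, ← C_pow, hpow1, map_one]
  have h3 : (∏ j ∈ (Finset.range m).erase a, ((X : ℂ[X]) - C (ω ^ j)))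
      = ∑ i ∈ Finset.range m, (X : ℂ[X]) ^ i * (C (ω ^ a)) ^ (m - 1 - i) :=
    mul_right_cancel₀ (X_sub_C_ne_zero (ω ^ a)) (h1.trans h2.symm)
  have h4 := congrArg (Polynomial.eval (ω ^ a)) h3
  rw [eval_prod, eval_finset_sum] at h4
  simp only [eval_sub, eval_X, eval_C, eval_mul, eval_pow] at h4
  rw [h4, Finset.sum_congr rfl (fun i hi => by
      rw [← pow_add]
      congr 1
      have := Finset.mem_range.1 hi
      omega : ∀ i ∈ Finset.range m, (ω ^ a) ^ i * (ω ^ a) ^ (m-1-i) = (ω^a)^(m-1)),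
    Finset.sum_const, Finset.card_range, nsmul_eq_mul]

noncomputable def cc (n j : ℕ) : ℝ := 2 * Real.cos (2 * ((j:ℝ) * (Real.pi / (2*(n:ℝ)))))

lemma key_complex (n l : ℕ) (hn : 2 ≤ n) (hl1 : 1 ≤ l) (hl2 : l ≤ n - 1) :
    (∏ j ∈ (Finset.range (n+1)).erase l, (cc n l - cc n j))^2 = 4 * (n:ℝ)^2 := by
  have hn0 : (n:ℂ) ≠ 0 := by exact_mod_cast (by omega : n ≠ 0)
  have h2n0 : (2*n : ℕ) ≠ 0 := by omega
  set ω : ℂ := Complex.exp (2 * (Real.pi:ℂ) * Complex.I / ((2*n : ℕ):ℂ)) with hωdef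
  have hω : IsPrimitiveRoot ω (2*n) := Complex.isPrimitiveRoot_exp (2*n) h2n0
  have hωne : ∀ j : ℕ, ω ^ j ≠ 0 := fun j => pow_ne_zero j (Complex.exp_ne_zero _)
  have hω2n : ω ^ (2*n) = 1 := hω.pow_eq_one
  have hinv : ∀ j : ℕ, j ≤ 2*n → ω ^ (2*n - j) = (ω ^ j)⁻¹ := by
    intro j hj
    refine eq_inv_of_mul_eq_one_left ?_
    rw [← pow_add, show 2*n - j + j = 2*n from by omega, hω2n]
  have hωn : ω ^ n = -1 := by
    rw [hωdef, ← Complex.exp_nat_mul]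
    rw [show (n:ℂ) * (2 * (Real.pi:ℂ) * Complex.I / ((2*n : ℕ):ℂ)) = (Real.pi:ℂ) * Complex.I by
      push_cast
      field_simp]
    exact Complex.exp_pi_mul_I
  have hcast : ∀ j : ℕ, ((cc n j : ℝ) : ℂ) = ω ^ j + (ω ^ j)⁻¹ := by
    intro j
    have hexp : Complex.exp ((2 * ((j:ℂ) * ((Real.pi:ℂ) / (2 * (n:ℂ))))) * Complex.I) = ω ^ j := by
      rw [hωdef, ← Complex.exp_nat_mul]
      congr 1
      push_cast
      field_simp
    rw [cc]
    push_cast [Complex.ofReal_cos]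
    rw [Complex.two_cos, neg_mul, Complex.exp_neg, hexp]
  set a : ℂ := ω ^ l with hadef
  set b : ℂ := (ω ^ l)⁻¹ with hbdef
  have ha0 : a ≠ 0 := hωne l
  have hab : a * b = 1 := mul_inv_cancel₀ ha0
  have hb : ω ^ (2*n - l) = b := hinv l (by omega)
  -- the squared-factor identity
  have hsq : ∀ w : ℂ, w ≠ 0 → ((a + a⁻¹) - (w + w⁻¹))^2
      = ((a - w) * (a - w⁻¹)) * ((b - w) * (b - w⁻¹)) := by
    intro w hw
    rw [hbdef, ← hadef]
    field_simp
    ring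
  -- the H-splitting
  have hH : ∀ z : ℂ, ∏ j ∈ (Finset.range (n+1)).erase l, ((z - ω^j) * (z - (ω^j)⁻¹))
      = ((z-1)^2 * (z+1)^2) *
        ((∏ j ∈ (Finset.Icc 1 (n-1)).erase l, (z - ω^j)) *
          (∏ j ∈ (Finset.Icc (n+1) (2*n-1)).erase (2*n-l), (z - ω^j))) := by
    intro z
    rw [Finset.prod_mul_distrib]
    have hE1 : (Finset.range (n+1)).erase l = insert 0 (insert n ((Finset.Icc 1 (n-1)).erase l)) := by
      ext x
      simp only [Finset.mem_erase, Finset.mem_range, Finset.mem_insert, Finset.mem_Icc]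
      omega
    have h0 : (0:ℕ) ∉ insert n ((Finset.Icc 1 (n-1)).erase l) := by
      simp only [Finset.mem_insert, Finset.mem_erase, Finset.mem_Icc]
      omega
    have hnn : n ∉ (Finset.Icc 1 (n-1)).erase l := by
      simp only [Finset.mem_erase, Finset.mem_Icc]
      omega
    have hre : ∏ j ∈ (Finset.Icc 1 (n-1)).erase l, (z - (ω^j)⁻¹)
        = ∏ j ∈ (Finset.Icc (n+1) (2*n-1)).erase (2*n-l), (z - ω^j) := by
      refine Finset.prod_nbij' (fun j => 2*n - j) (fun j => 2*n - j) ?_ ?_ ?_ ?_ ?_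
      · intro x hx
        simp only [Finset.mem_erase, Finset.mem_Icc] at *
        omega
      · intro x hx
        simp only [Finset.mem_erase, Finset.mem_Icc] at *
        omega
      · intro x hx
        simp only [Finset.mem_erase, Finset.mem_Icc] at hx
        omega
      · intro x hx
        simp only [Finset.mem_erase, Finset.mem_Icc] at hx
        omega
      · intro x hx
        simp only [Finset.mem_erase, Finset.mem_Icc] at hx
        rw [hinv x (by omega)]
    rw [hE1, Finset.prod_insert h0, Finset.prod_insert hnn,
      Finset.prod_insert h0, Finset.prod_insert hnn, hre, pow_zero, hωn, inv_one, inv_neg_one]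
    ring
  -- disjointness and splittings of range (2n)
  have hM12 : Disjoint ((Finset.Icc 1 (n-1)).erase l)
      ((Finset.Icc (n+1) (2*n-1)).erase (2*n-l)) := by
    rw [Finset.disjoint_left]
    intro x hx hx'
    simp only [Finset.mem_erase, Finset.mem_Icc] at *
    omega
  have hsplit1 : (Finset.range (2*n)).erase l
      = insert 0 (insert n (insert (2*n-l)
          (((Finset.Icc 1 (n-1)).erase l) ∪ ((Finset.Icc (n+1) (2*n-1)).erase (2*n-l))))) := by
    ext x
    simp only [Finset.mem_erase, Finset.mem_range, Finset.mem_insert, Finset.mem_union,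
      Finset.mem_Icc]
    omega
  have hsplit2 : (Finset.range (2*n)).erase (2*n-l)
      = insert 0 (insert n (insert l
          (((Finset.Icc 1 (n-1)).erase l) ∪ ((Finset.Icc (n+1) (2*n-1)).erase (2*n-l))))) := by
    ext x
    simp only [Finset.mem_erase, Finset.mem_range, Finset.mem_insert, Finset.mem_union,
      Finset.mem_Icc]
    omega
  have h01 : (0:ℕ) ∉ insert n (insert (2*n-l)
      (((Finset.Icc 1 (n-1)).erase l) ∪ ((Finset.Icc (n+1) (2*n-1)).erase (2*n-l)))) := by
    simp only [Finset.mem_insert, Finset.mem_union, Finset.mem_erase, Finset.mem_Icc]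
    omega
  have hn1 : n ∉ insert (2*n-l)
      (((Finset.Icc 1 (n-1)).erase l) ∪ ((Finset.Icc (n+1) (2*n-1)).erase (2*n-l))) := by
    simp only [Finset.mem_insert, Finset.mem_union, Finset.mem_erase, Finset.mem_Icc]
    omega
  have h2nl : 2*n-l ∉ ((Finset.Icc 1 (n-1)).erase l) ∪ ((Finset.Icc (n+1) (2*n-1)).erase (2*n-l)) := by
    simp only [Finset.mem_union, Finset.mem_erase, Finset.mem_Icc]
    omega
  have h02 : (0:ℕ) ∉ insert n (insert l
      (((Finset.Icc 1 (n-1)).erase l) ∪ ((Finset.Icc (n+1) (2*n-1)).erase (2*n-l)))) := by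
    simp only [Finset.mem_insert, Finset.mem_union, Finset.mem_erase, Finset.mem_Icc]
    omega
  have hn2 : n ∉ insert l
      (((Finset.Icc 1 (n-1)).erase l) ∪ ((Finset.Icc (n+1) (2*n-1)).erase (2*n-l))) := by
    simp only [Finset.mem_insert, Finset.mem_union, Finset.mem_erase, Finset.mem_Icc]
    omega
  have hl' : l ∉ ((Finset.Icc 1 (n-1)).erase l) ∪ ((Finset.Icc (n+1) (2*n-1)).erase (2*n-l)) := by
    simp only [Finset.mem_union, Finset.mem_erase, Finset.mem_Icc]
    omega
  have hA1 := lemA (show 0 < 2*n by omega) hω (show l < 2*n by omega)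
  rw [hsplit1, Finset.prod_insert h01, Finset.prod_insert hn1, Finset.prod_insert h2nl,
    Finset.prod_union hM12, pow_zero, hωn, hb, ← hadef] at hA1
  have hA2 := lemA (show 0 < 2*n by omega) hω (show 2*n - l < 2*n by omega)
  rw [hsplit2, Finset.prod_insert h02, Finset.prod_insert hn2, Finset.prod_insert hl',
    Finset.prod_union hM12, pow_zero, hωn, hb, ← hadef] at hA2
  have key : (a-1)*(a+1)*(b-1)*(b+1) = (a-b)*(b-a) := by
    linear_combination (a*b - 1) * hab
  have hcastprod : ((∏ j ∈ (Finset.range (n+1)).erase l, (cc n l - cc n j) : ℝ) : ℂ)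
      = ∏ j ∈ (Finset.range (n+1)).erase l, ((a + a⁻¹) - (ω^j + (ω^j)⁻¹)) := by
    push_cast
    exact Finset.prod_congr rfl fun j _ => by rw [hcast l, hcast j, ← hadef]
  have hW : ((∏ j ∈ (Finset.range (n+1)).erase l, (cc n l - cc n j) : ℝ) : ℂ)^2
      = ((2*n : ℕ):ℂ) * a^(2*n-1) * (((2*n : ℕ):ℂ) * b^(2*n-1)) := by
    rw [hcastprod, ← Finset.prod_pow,
      Finset.prod_congr rfl (fun j _ => hsq (ω^j) (hωne j)),
      Finset.prod_mul_distrib, hH a, hH b, ← hA1, ← hA2]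
    linear_combination ((∏ j ∈ (Finset.Icc 1 (n-1)).erase l, (a - ω^j)) *
      (∏ j ∈ (Finset.Icc (n+1) (2*n-1)).erase (2*n-l), (a - ω^j)) *
      (∏ j ∈ (Finset.Icc 1 (n-1)).erase l, (b - ω^j)) *
      (∏ j ∈ (Finset.Icc (n+1) (2*n-1)).erase (2*n-l), (b - ω^j)) *
      ((a-1)*(a+1)*(b-1)*(b+1))) * key
  have h1 : a^(2*n-1) * b^(2*n-1) = 1 := by rw [← mul_pow, hab, one_pow]
  have hfin : ((∏ j ∈ (Finset.range (n+1)).erase l, (cc n l - cc n j) : ℝ) : ℂ)^2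
      = ((4 * (n:ℝ)^2 : ℝ) : ℂ) := by
    rw [hW]
    push_cast
    linear_combination (4*(n:ℂ)^2) * h1
  exact_mod_cast hfin

lemma trig (A B : ℝ) : (4 * Real.sin (A - B) ^ 2) * (4 * Real.sin (A + B) ^ 2)
    = (2 * Real.cos (2 * B) - 2 * Real.cos (2 * A)) ^ 2 := by
  have h1 : Real.sin (A - B) * Real.sin (A + B) = Real.sin A ^ 2 - Real.sin B ^ 2 := by
    rw [Real.sin_sub, Real.sin_add]
    linear_combination (Real.sin A ^ 2) * (Real.sin_sq_add_cos_sq B)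
      - (Real.sin B ^ 2) * (Real.sin_sq_add_cos_sq A)
  have h2 : 2 * Real.cos (2 * B) - 2 * Real.cos (2 * A)
      = 4 * Real.sin A ^ 2 - 4 * Real.sin B ^ 2 := by
    rw [Real.cos_two_mul, Real.cos_two_mul]
    linear_combination 4 * (Real.sin_sq_add_cos_sq B) - 4 * (Real.sin_sq_add_cos_sq A)
  rw [h2]
  calc (4 * Real.sin (A - B) ^ 2) * (4 * Real.sin (A + B) ^ 2)
      = 16 * (Real.sin (A - B) * Real.sin (A + B)) ^ 2 := by ring
    _ = 16 * (Real.sin A ^ 2 - Real.sin B ^ 2) ^ 2 := by rw [h1]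
    _ = (4 * Real.sin A ^ 2 - 4 * Real.sin B ^ 2) ^ 2 := by ring

/-- For `n ≥ 2` and `1 ≤ l ≤ n-1`:
`(∏_{j=l+1}^{n} f_{2n}(j-l) f_{2n}(j+l)) · (∏_{i=0}^{l-1} f_{2n}(l-i) f_{2n}(l+i)) = 4n²`. -/
theorem prod_denominator (n l : ℕ) (hn : 2 ≤ n) (hl1 : 1 ≤ l) (hl2 : l ≤ n - 1) :
    (∏ j ∈ Finset.Icc (l + 1) n,
        f (2 * n) ((j : ℝ) - (l : ℝ)) * f (2 * n) ((j : ℝ) + (l : ℝ))) *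
      (∏ i ∈ Finset.range l,
        f (2 * n) ((l : ℝ) - (i : ℝ)) * f (2 * n) ((l : ℝ) + (i : ℝ)))
      = 4 * (n : ℝ) ^ 2 := by
  have hfact1 : ∀ j : ℕ, f (2*n) ((j:ℝ) - (l:ℝ)) * f (2*n) ((j:ℝ) + (l:ℝ))
      = (cc n l - cc n j)^2 := by
    intro j
    have h := trig ((j:ℝ) * (Real.pi / (2*(n:ℝ)))) ((l:ℝ) * (Real.pi / (2*(n:ℝ))))
    simp only [f]
    rw [show ((j:ℝ) - (l:ℝ)) * Real.pi / ((2*n : ℕ):ℝ)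
          = (j:ℝ)*(Real.pi/(2*(n:ℝ))) - (l:ℝ)*(Real.pi/(2*(n:ℝ))) by push_cast; ring,
       show ((j:ℝ) + (l:ℝ)) * Real.pi / ((2*n : ℕ):ℝ)
          = (j:ℝ)*(Real.pi/(2*(n:ℝ))) + (l:ℝ)*(Real.pi/(2*(n:ℝ))) by push_cast; ring,
       h]
    simp only [cc]
  have hfact2 : ∀ i : ℕ, f (2*n) ((l:ℝ) - (i:ℝ)) * f (2*n) ((l:ℝ) + (i:ℝ))
      = (cc n l - cc n i)^2 := by
    intro i
    have h := trig ((l:ℝ) * (Real.pi / (2*(n:ℝ)))) ((i:ℝ) * (Real.pi / (2*(n:ℝ))))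
    simp only [f]
    rw [show ((l:ℝ) - (i:ℝ)) * Real.pi / ((2*n : ℕ):ℝ)
          = (l:ℝ)*(Real.pi/(2*(n:ℝ))) - (i:ℝ)*(Real.pi/(2*(n:ℝ))) by push_cast; ring,
       show ((l:ℝ) + (i:ℝ)) * Real.pi / ((2*n : ℕ):ℝ)
          = (l:ℝ)*(Real.pi/(2*(n:ℝ))) + (i:ℝ)*(Real.pi/(2*(n:ℝ))) by push_cast; ring,
       h]
    simp only [cc]
    ring
  rw [Finset.prod_congr rfl (fun j _ => hfact1 j), Finset.prod_congr rfl (fun i _ => hfact2 i),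
    Finset.prod_pow, Finset.prod_pow, ← mul_pow]
  have hdisj : Disjoint (Finset.Icc (l+1) n) (Finset.range l) := by
    rw [Finset.disjoint_left]
    intro x hx hx'
    simp only [Finset.mem_Icc, Finset.mem_range] at *
    omega
  have hunion : (∏ j ∈ Finset.Icc (l+1) n, (cc n l - cc n j))
      * (∏ i ∈ Finset.range l, (cc n l - cc n i))
      = ∏ j ∈ (Finset.range (n+1)).erase l, (cc n l - cc n j) := by
    rw [← Finset.prod_union hdisj]
    apply Finset.prod_congr _ (fun _ _ => rfl)
    ext x
    simp only [Finset.mem_union, Finset.mem_Icc, Finset.mem_range, Finset.mem_erase]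
    omega
  rw [hunion]
  exact key_complex n l hn hl1 hl2
end

section
/- Fix an integer g ≥ 2. Consider all triples of integers 0 < u₁ < u₂ < u₃ < 5, and set u₀ = 0. Then the sum over all such triples of (4·5³ / ∏_{0≤i<j≤3} f₅(u_j − u_i))^{g−1} equals 2^{2g}, where f_k(r) = 4·sin²(rπ/k). -/
open Real in
private lemma sin_sq_prod_five : Real.sin (π/5)^2 * Real.sin (2*π/5)^2 = 5/16 := by
  have h1 : Real.cos (π/5) = (1+√5)/4 := Real.cos_pi_div_five
  have h2 : Real.cos (2*π/5) = 2 * Real.cos (π/5)^2 - 1 := by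
    rw [← Real.cos_two_mul]; ring_nf
  have s5 : (√5)^2 = 5 := Real.sq_sqrt (by norm_num)
  rw [Real.sin_sq, Real.sin_sq, h2, h1]
  linear_combination (19/1024 - 39/512*√5 - 3/256*√5^2 + 3/512*√5^3 + 1/1024*√5^4) * s5

private lemma f51_mul_f52 : f 5 1 * f 5 2 = 5 := by
  unfold f
  have := sin_sq_prod_five
  push_cast
  rw [show (1:ℝ) * Real.pi / 5 = Real.pi/5 by ring, show (2:ℝ) * Real.pi / 5 = 2*Real.pi/5 by ring]
  nlinarith [sin_sq_prod_five]

private lemma f53 : f 5 3 = f 5 2 := by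
  unfold f
  norm_num
  rw [show (3:ℝ) * Real.pi / 5 = Real.pi - 2 * Real.pi / 5 by ring, Real.sin_pi_sub]

private lemma f54 : f 5 4 = f 5 1 := by
  unfold f
  norm_num
  rw [show (4:ℝ) * Real.pi / 5 = Real.pi - 1 * Real.pi / 5 by ring, Real.sin_pi_sub,
    show (1:ℝ) * Real.pi / 5 = Real.pi / 5 by ring]

private lemma filt0 : (Finset.univ.filter (fun j => (0:Fin 4) < j)) = {1,2,3} := by decide
private lemma filt1 : (Finset.univ.filter (fun j => (1:Fin 4) < j)) = {2,3} := by decide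
private lemma filt2 : (Finset.univ.filter (fun j => (2:Fin 4) < j)) = {3} := by decide
private lemma filt3 : (Finset.univ.filter (fun j => (3:Fin 4) < j)) = ∅ := by decide

private lemma prod_eq_125 (u : Fin 3 → ℤ)
    (hu : u = ![1,2,3] ∨ u = ![1,2,4] ∨ u = ![1,3,4] ∨ u = ![2,3,4]) :
    (∏ i : Fin 4, ∏ j ∈ Finset.univ.filter (fun j => i < j),
      f 5 (((Fin.cons 0 u : Fin 4 → ℤ) j : ℝ) - ((Fin.cons 0 u : Fin 4 → ℤ) i : ℝ)))
    = 125 := by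
  have key : f 5 1 ^ 3 * f 5 2 ^ 3 = 125 := by
    linear_combination (f 5 1^2 * f 5 2^2 + 5 * f 5 1 * f 5 2 + 25) * f51_mul_f52
  rcases hu with rfl | rfl | rfl | rfl
  · have hc : (Fin.cons 0 ![1,2,3] : Fin 4 → ℤ) = ![0,1,2,3] := by decide
    rw [Fin.prod_univ_four, filt0, filt1, filt2, filt3, hc,
      Finset.prod_insert (by decide), Finset.prod_insert (by decide),
      Finset.prod_insert (by decide), Finset.prod_singleton, Finset.prod_singleton,
      Finset.prod_singleton, Finset.prod_empty]
    norm_num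
    simp only [Matrix.cons_val, f53, f54]
    norm_num [f53, f54]
    linear_combination key
  · have hc : (Fin.cons 0 ![1,2,4] : Fin 4 → ℤ) = ![0,1,2,4] := by decide
    rw [Fin.prod_univ_four, filt0, filt1, filt2, filt3, hc,
      Finset.prod_insert (by decide), Finset.prod_insert (by decide),
      Finset.prod_insert (by decide), Finset.prod_singleton, Finset.prod_singleton,
      Finset.prod_singleton, Finset.prod_empty]
    norm_num
    simp only [Matrix.cons_val, f53, f54]
    norm_num [f53, f54]
    linear_combination key
  · have hc : (Fin.cons 0 ![1,3,4] : Fin 4 → ℤ) = ![0,1,3,4] := by decide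
    rw [Fin.prod_univ_four, filt0, filt1, filt2, filt3, hc,
      Finset.prod_insert (by decide), Finset.prod_insert (by decide),
      Finset.prod_insert (by decide), Finset.prod_singleton, Finset.prod_singleton,
      Finset.prod_singleton, Finset.prod_empty]
    norm_num
    simp only [Matrix.cons_val, f53, f54]
    norm_num [f53, f54]
    linear_combination key
  · have hc : (Fin.cons 0 ![2,3,4] : Fin 4 → ℤ) = ![0,2,3,4] := by decide
    rw [Fin.prod_univ_four, filt0, filt1, filt2, filt3, hc,
      Finset.prod_insert (by decide), Finset.prod_insert (by decide),
      Finset.prod_insert (by decide), Finset.prod_singleton, Finset.prod_singleton,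
      Finset.prod_singleton, Finset.prod_empty]
    norm_num
    simp only [Matrix.cons_val, f53, f54]
    norm_num [f53, f54]
    linear_combination key

private lemma set_classify :
    {u : Fin 3 → ℤ | StrictMono u ∧ 0 < u 0 ∧ u 2 < 5}
      = ↑({![1,2,3], ![1,2,4], ![1,3,4], ![2,3,4]} : Finset (Fin 3 → ℤ)) := by
  ext u
  simp only [Set.mem_setOf_eq, Finset.coe_insert, Finset.coe_singleton, Set.mem_insert_iff,
    Set.mem_singleton_iff]
  constructor
  · rintro ⟨hsm, h0, h2⟩
    have h01 : u 0 < u 1 := hsm (by decide : (0:Fin 3) < 1)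
    have h12 : u 1 < u 2 := hsm (by decide : (1:Fin 3) < 2)
    have hu : u = ![u 0, u 1, u 2] := by funext i; fin_cases i <;> rfl
    rw [hu]
    have b1 : 1 ≤ u 0 := by omega
    have b2 : u 0 ≤ 2 := by omega
    have b3 : 2 ≤ u 1 := by omega
    have b4 : u 1 ≤ 3 := by omega
    have b5 : 3 ≤ u 2 := by omega
    have b6 : u 2 ≤ 4 := by omega
    interval_cases h : u 0 <;> interval_cases h2 : u 1 <;> interval_cases h3 : u 2 <;> simp_all
  · rintro (rfl|rfl|rfl|rfl) <;>
      refine ⟨fun i j hij => ?_, by decide, by decide⟩ <;> fin_cases i <;> fin_cases j <;>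
        simp_all

/-- For `g ≥ 2`, the sum over all triples of integers `0 < u₁ < u₂ < u₃ < 5`
(with `u₀ = 0`) of `(4·5³ / ∏_{0 ≤ i < j ≤ 3} f₅(u_j - u_i))^{g-1}` equals `2^{2g}`.
(This is the level-1 Verlinde number `N₁(SL₄)`.) -/
theorem verlinde_N1_SL4 (g : ℕ) (hg : 2 ≤ g) :
    ∑ᶠ (u : {u : Fin 3 → ℤ // StrictMono u ∧ 0 < u 0 ∧ u 2 < 5}),
      (4 * (5 : ℝ) ^ 3 /
        ∏ i : Fin 4, ∏ j ∈ Finset.univ.filter (fun j => i < j),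
          f 5 (((Fin.cons 0 u.1 : Fin 4 → ℤ) j : ℝ) - ((Fin.cons 0 u.1 : Fin 4 → ℤ) i : ℝ)))
      ^ (g - 1)
    = 2 ^ (2 * g) := by
  set F : (Fin 3 → ℤ) → ℝ := fun u =>
    (4 * (5 : ℝ) ^ 3 /
        ∏ i : Fin 4, ∏ j ∈ Finset.univ.filter (fun j => i < j),
          f 5 (((Fin.cons 0 u : Fin 4 → ℤ) j : ℝ) - ((Fin.cons 0 u : Fin 4 → ℤ) i : ℝ)))
      ^ (g - 1) with hF
  have h1 : ∑ᶠ (u : {u : Fin 3 → ℤ // StrictMono u ∧ 0 < u 0 ∧ u 2 < 5}), F u.1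
      = ∑ᶠ u ∈ {u : Fin 3 → ℤ | StrictMono u ∧ 0 < u 0 ∧ u 2 < 5}, F u :=
    finsum_subtype_eq_finsum_cond _
  rw [h1, set_classify, finsum_mem_coe_finset,
    Finset.sum_insert (by decide), Finset.sum_insert (by decide),
    Finset.sum_insert (by decide), Finset.sum_singleton]
  have t : ∀ u, (u = ![1,2,3] ∨ u = ![1,2,4] ∨ u = ![1,3,4] ∨ u = ![2,3,4]) →
      F u = 4 ^ (g-1) := by
    intro u hu
    rw [hF]
    simp only
    rw [prod_eq_125 u hu]
    norm_num
  rw [t _ (Or.inl rfl), t _ (Or.inr (Or.inl rfl)), t _ (Or.inr (Or.inr (Or.inl rfl))),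
    t _ (Or.inr (Or.inr (Or.inr rfl)))]
  have e : (4:ℝ)^(g-1) + (4^(g-1) + (4^(g-1) + 4^(g-1))) = 4^(g-1) * 4 := by ring
  rw [e, ← pow_succ, show g - 1 + 1 = g from by omega,
    show (2:ℝ)^(2*g) = 4^g from by rw [pow_mul]; norm_num]
end

section
/- For all integers n ≥ 4 and g ≥ 2, the following identity holds: (2n)^{g−1}·(n−1) + 2^{3g−1}·n^{g−1} + 2^{3g−1} = ((2n)^g + 2^g)/2 + (2^{2g} − 1)·((2n)^{g−1} + 2^{g−1}). -/
/-- For `n ≥ 4` and `g ≥ 2`: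
`(2n)^{g-1}(n-1) + 2^{3g-1} n^{g-1} + 2^{3g-1}
  = ((2n)^g + 2^g)/2 + (2^{2g} - 1)((2n)^{g-1} + 2^{g-1})`.
This is the numerology identity underlying Theorem 6.1(1), '+' case, for `m = 2n`. -/
theorem numerology_even_plus (n g : ℕ) (hn : 4 ≤ n) (hg : 2 ≤ g) :
    (2 * n : ℝ) ^ (g - 1) * (n - 1) + 2 ^ (3 * g - 1) * (n : ℝ) ^ (g - 1) + 2 ^ (3 * g - 1)
      = ((2 * n : ℝ) ^ g + 2 ^ g) / 2
        + (2 ^ (2 * g) - 1) * ((2 * n : ℝ) ^ (g - 1) + 2 ^ (g - 1)) := by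
  obtain ⟨k, rfl⟩ : ∃ k, g = k + 1 := ⟨g - 1, by omega⟩
  have h1 : k + 1 - 1 = k := rfl
  have h2 : 3 * (k + 1) - 1 = 3 * k + 2 := by omega
  have h3 : 2 * (k + 1) = 2 * k + 2 := by ring
  rw [h1, h2, h3]
  ring
end
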